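/- Let W(δ) denote the orthogonal projection of δ_1·𝐧_1 + … + δ_t·𝐧_t onto the orthogonal complement of ker A. Then for all τ, δ ∈ ℤ^t, B⟨T(τ+δ)⟩ = (A(W(δ))) +ᵥ B⟨T(τ)⟩; in particular, if two offsets δ, δ' ∈ ℤ^t satisfy W(δ) = W(δ'), then B⟨T(τ+δ)⟩ = B⟨T(τ+δ')⟩, i.e., all tiles of the family {τ + δ' : W(δ') = W(δ)} have the same footprint. -/

import Mathlib

open RealInnerProductSpace Pointwise

/-- with `W δ` the orthogonal projection of `∑ j, δ j • 𝐧 j` onto the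
orthogonal complement of `ker A`, footprints translate by `A (W δ)`; in particular
offsets with equal projections give equal footprints. -/
theorem footprint_translate_proj
    (d t k : ℕ) (ht : t ≤ d)
    (n : Fin t → EuclideanSpace ℝ (Fin d)) (hn : LinearIndependent ℝ n)
    (s : Fin t → ℝ) (hs : ∀ j, 0 < s j)
    (N : Fin t → EuclideanSpace ℝ (Fin d))
    (hN : ∀ i j, ⟪N i, n j⟫ = if i = j then s j else 0)
    (A : EuclideanSpace ℝ (Fin d) →ₗ[ℝ] EuclideanSpace ℝ (Fin k))
    (b : EuclideanSpace ℝ (Fin k))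
    (T : (Fin t → ℤ) → Set (EuclideanSpace ℝ (Fin d)))
    (hT : ∀ τ, T τ = {x | ∀ j, s j * (τ j : ℝ) ≤ ⟪x, n j⟫ ∧ ⟪x, n j⟫ < s j * ((τ j : ℝ) + 1)})
    (W : (Fin t → ℤ) → EuclideanSpace ℝ (Fin d))
    (hW : ∀ δ, W δ =
      (Submodule.orthogonalProjection (LinearMap.ker A)ᗮ (∑ j, (δ j : ℝ) • N j) :
        EuclideanSpace ℝ (Fin d))) :
    (∀ τ δ : Fin t → ℤ,
      (fun x => A x + b) '' T (τ + δ) = A (W δ) +ᵥ ((fun x => A x + b) '' T τ)) ∧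
    (∀ τ δ δ' : Fin t → ℤ, W δ = W δ' →
      (fun x => A x + b) '' T (τ + δ) = (fun x => A x + b) '' T (τ + δ')) := by
  have main : ∀ τ δ : Fin t → ℤ,
      (fun x => A x + b) '' T (τ + δ) = A (W δ) +ᵥ ((fun x => A x + b) '' T τ) := by
    intro τ δ
    set v : EuclideanSpace ℝ (Fin d) := ∑ j, (δ j : ℝ) • N j with hv
    -- A (W δ) = A v
    have hAW : A (W δ) = A v := by
      have hmem : v - W δ ∈ ((LinearMap.ker A)ᗮ)ᗮ := by
        rw [hW δ]
        exact Submodule.sub_starProjection_mem_orthogonal (K := (LinearMap.ker A)ᗮ) v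
      rw [Submodule.orthogonal_orthogonal] at hmem
      have h2 : A v - A (W δ) = 0 := by rw [← map_sub]; exact hmem
      have h3 : A v = A (W δ) := sub_eq_zero.mp h2
      exact h3.symm
    -- inner product of v with n j
    have hvn : ∀ j, ⟪v, n j⟫ = s j * (δ j : ℝ) := by
      intro j
      rw [hv, sum_inner]
      rw [Finset.sum_eq_single j]
      · rw [real_inner_smul_left, hN j j]; simp [mul_comm]
      · intro i _ hij
        rw [real_inner_smul_left, hN i j, if_neg hij, mul_zero]
      · simp
    -- tile translation
    have hTT : T (τ + δ) = v +ᵥ T τ := by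
      ext x
      rw [hT, hT]
      constructor
      · intro hx
        refine ⟨x - v, fun j => ?_, by simp⟩
        have := hx j
        simp only [Pi.add_apply, Int.cast_add] at this
        rw [inner_sub_left, hvn j]
        constructor <;> nlinarith [this.1, this.2]
      · rintro ⟨y, hy, rfl⟩
        intro j
        have := hy j
        simp only [Pi.add_apply, Int.cast_add, vadd_eq_add]
        rw [inner_add_left, hvn j]
        constructor <;> nlinarith [this.1, this.2]
    rw [hTT, hAW]
    ext z
    simp only [Set.mem_image, Set.mem_vadd_set, vadd_eq_add]
    constructor
    · rintro ⟨x, ⟨y, hy, rfl⟩, rfl⟩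
      exact ⟨A y + b, ⟨y, hy, rfl⟩, by rw [map_add]; abel⟩
    · rintro ⟨w, ⟨y, hy, rfl⟩, rfl⟩
      exact ⟨v + y, ⟨y, hy, rfl⟩, by rw [map_add]; abel⟩
  refine ⟨main, fun τ δ δ' h => ?_⟩
  rw [main τ δ, main τ δ', h]
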